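/- If σ : ℝ → ℝ is a non-constant finite trigonometric sum σ(y) = Σ_{i=1}^k a_i cos(w_i y + b_i) with a_i ≠ 0 and distinct |w₁| < ⋯ < |w_k|, then there exist m ∈ ℕ₊ and (γ_i, ξ_i, η_i) ∈ ℝ³, i = 1,…,m, such that Σ_{i=1}^m γ_i σ(ξ_i y + η_i) = cos(y) for all y ∈ ℝ. -/

import Mathlib

open Real

/-- `g` is achievable from `σ`: a finite linear combination of scaled/shifted copies. -/
def Ach (σ g : ℝ → ℝ) : Prop :=
  ∃ m : ℕ, 0 < m ∧ ∃ γ ξ η : Fin m → ℝ,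
    ∀ y, ∑ i, γ i * σ (ξ i * y + η i) = g y

lemma ach_congr {σ g g' : ℝ → ℝ} (h : Ach σ g) (he : ∀ y, g y = g' y) : Ach σ g' := by
  obtain ⟨m, hm, γ, ξ, η, H⟩ := h
  exact ⟨m, hm, γ, ξ, η, fun y => (H y).trans (he y)⟩

lemma ach_base (σ : ℝ → ℝ) (p q : ℝ) : Ach σ (fun y => σ (p * y + q)) :=
  ⟨1, one_pos, fun _ => 1, fun _ => p, fun _ => q, fun y => by simp⟩

lemma ach_smul {σ g : ℝ → ℝ} (c : ℝ) (h : Ach σ g) : Ach σ (fun y => c * g y) := by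
  obtain ⟨m, hm, γ, ξ, η, H⟩ := h
  refine ⟨m, hm, fun i => c * γ i, ξ, η, fun y => ?_⟩
  simp only [mul_assoc, ← Finset.mul_sum, H]

lemma ach_add {σ g₁ g₂ : ℝ → ℝ} (h₁ : Ach σ g₁) (h₂ : Ach σ g₂) :
    Ach σ (fun y => g₁ y + g₂ y) := by
  obtain ⟨m₁, hm₁, γ₁, ξ₁, η₁, H₁⟩ := h₁
  obtain ⟨m₂, hm₂, γ₂, ξ₂, η₂, H₂⟩ := h₂
  refine ⟨m₁ + m₂, by omega, Fin.append γ₁ γ₂, Fin.append ξ₁ ξ₂, Fin.append η₁ η₂,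
    fun y => ?_⟩
  rw [Fin.sum_univ_add]
  simp only [Fin.append_left, Fin.append_right, H₁, H₂]

lemma ach_comp {σ g : ℝ → ℝ} (h : Ach σ g) (p q : ℝ) :
    Ach σ (fun y => g (p * y + q)) := by
  obtain ⟨m, hm, γ, ξ, η, H⟩ := h
  refine ⟨m, hm, γ, fun i => ξ i * p, fun i => ξ i * q + η i, fun y => ?_⟩
  calc ∑ i, γ i * σ (ξ i * p * y + (ξ i * q + η i))
      = ∑ i, γ i * σ (ξ i * (p * y + q) + η i) := by
        refine Finset.sum_congr rfl fun i _ => ?_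
        ring_nf
    _ = g (p * y + q) := H _

/-- If `σ` is a non-constant finite trigonometric sum `σ(y) = Σᵢ aᵢ cos(wᵢy + bᵢ)` with
`aᵢ ≠ 0` and `|w₁| < ⋯ < |w_k|`, then `cos` is a finite linear combination of scaled and
shifted copies of `σ`: there exist `m ≥ 1` and `(γᵢ, ξᵢ, ηᵢ)` with
`Σᵢ γᵢ σ(ξᵢ y + ηᵢ) = cos y` for all `y`. -/
theorem cos_from_trig_sum (k : ℕ) (hk : 0 < k) (a w b : Fin k → ℝ)
    (ha : ∀ i, a i ≠ 0) (hw : StrictMono fun i => |w i|)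
    (σ : ℝ → ℝ) (hσ : ∀ y, σ y = ∑ i, a i * Real.cos (w i * y + b i))
    (hnc : ∃ y₁ y₂, σ y₁ ≠ σ y₂) :
    ∃ m : ℕ, 0 < m ∧ ∃ γ ξ η : Fin m → ℝ,
      ∀ y, ∑ i, γ i * σ (ξ i * y + η i) = Real.cos y := by
  -- the top-frequency index
  set t : Fin k := ⟨k - 1, by omega⟩ with ht
  have hle : ∀ i : Fin k, |w i| ≤ |w t| := by
    intro i
    exact hw.monotone (by simp [ht, Fin.le_def]; omega)
  -- the top frequency is nonzero
  have hu : 0 < |w t| := by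
    rcases lt_or_eq_of_le (abs_nonneg (w t)) with h | h
    · exact h
    · exfalso
      obtain ⟨y₁, y₂, hne⟩ := hnc
      apply hne
      have hw0 : ∀ i : Fin k, w i = 0 := by
        intro i
        have := hle i
        rw [← h] at this
        have := le_antisymm this (abs_nonneg _)
        exact abs_eq_zero.mp this
      rw [hσ, hσ]
      refine Finset.sum_congr rfl fun i _ => ?_
      rw [hw0 i]; ring_nf
  set s : ℝ := π / |w t| with hs
  have hspos : 0 < s := div_pos pi_pos hu
  -- frequencies as a function on ℕ
  set W : ℕ → ℝ := fun n => if h : n < k then w ⟨n, h⟩ else 0 with hW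
  -- the filtered functions
  set P : Fin k → ℕ → ℝ :=
    fun i j => ∏ l ∈ Finset.range j, (2 * (Real.cos (w i * s) - Real.cos (W l * s))) with hP
  have key : ∀ j : ℕ, j ≤ k - 1 →
      Ach σ (fun y => ∑ i, a i * P i j * Real.cos (w i * y + b i)) := by
    intro j hj
    induction j with
    | zero =>
      refine ach_congr (ach_base σ 1 0) fun y => ?_
      rw [one_mul, add_zero, hσ]
      refine Finset.sum_congr rfl fun i _ => ?_
      simp [hP]
    | succ j ih =>
      have hach := ih (by omega)
      have h1 := ach_comp hach 1 s
      have h2 := ach_comp hach 1 (-s)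
      have h3 := ach_smul (-(2 * Real.cos (W j * s))) hach
      refine ach_congr (ach_add (ach_add h1 h2) h3) fun y => ?_
      simp only [one_mul]
      simp only [Finset.mul_sum]
      rw [← Finset.sum_add_distrib, ← Finset.sum_add_distrib]
      refine Finset.sum_congr rfl fun i _ => ?_
      have hPsucc : P i (j + 1) = P i j * (2 * (Real.cos (w i * s) - Real.cos (W j * s))) := by
        simp [hP, Finset.prod_range_succ]
      rw [hPsucc]
      have e1 : w i * (y + s) + b i = (w i * y + b i) + w i * s := by ring
      have e2 : w i * (y + -s) + b i = (w i * y + b i) - w i * s := by ring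
      rw [e1, e2, Real.cos_add, Real.cos_sub]
      ring
  have hkey := key (k - 1) le_rfl
  -- for i ≠ t, P i (k-1) = 0
  have hP0 : ∀ i : Fin k, i ≠ t → P i (k - 1) = 0 := by
    intro i hi
    apply Finset.prod_eq_zero (i := (i : ℕ))
    · simp only [Finset.mem_range]
      have : (i : ℕ) < k := i.isLt
      have : i < t := lt_of_le_of_ne (by simp [ht, Fin.le_def]; omega) hi
      simpa [ht, Fin.lt_def] using this
    · have : W (i : ℕ) = w i := by simp [hW, i.isLt]
      rw [this]
      ring
  -- P t (k-1) ≠ 0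
  have hPt : P t (k - 1) ≠ 0 := by
    apply Finset.prod_ne_zero_iff.mpr
    intro l hl
    simp only [Finset.mem_range] at hl
    have hlk : l < k := by omega
    have hWl : W l = w ⟨l, hlk⟩ := by simp [hW, hlk]
    rw [hWl]
    have hlt : (⟨l, hlk⟩ : Fin k) < t := by simp [ht, Fin.lt_def]; omega
    have habs : |w ⟨l, hlk⟩| < |w t| := hw hlt
    have hne : Real.cos (w t * s) ≠ Real.cos (w ⟨l, hlk⟩ * s) := by
      have ct : Real.cos (w t * s) = Real.cos (|w t| * s) := by
        rcases abs_cases (w t) with ⟨h, _⟩ | ⟨h, _⟩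
        · rw [h]
        · rw [h]; rw [show -w t * s = -(w t * s) by ring, Real.cos_neg]
      have cl : Real.cos (w ⟨l, hlk⟩ * s) = Real.cos (|w ⟨l, hlk⟩| * s) := by
        rcases abs_cases (w ⟨l, hlk⟩) with ⟨h, _⟩ | ⟨h, _⟩
        · rw [h]
        · rw [h]; rw [show -w ⟨l, hlk⟩ * s = -(w ⟨l, hlk⟩ * s) by ring, Real.cos_neg]
      rw [ct, cl]
      intro hceq
      have hmem1 : |w t| * s ∈ Set.Icc 0 π := by
        constructor
        · positivity
        · rw [hs]; field_simp; exact le_rfl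
      have hmem2 : |w ⟨l, hlk⟩| * s ∈ Set.Icc 0 π := by
        constructor
        · positivity
        · calc |w ⟨l, hlk⟩| * s ≤ |w t| * s := by
                exact mul_le_mul_of_nonneg_right habs.le hspos.le
          _ = π := by rw [hs]; field_simp
      have := Real.injOn_cos hmem1 hmem2 hceq
      have := mul_right_cancel₀ (ne_of_gt hspos) this
      exact absurd this (ne_of_gt habs)
    intro hzero
    apply hne
    have : Real.cos (w t * s) - Real.cos (w ⟨l, hlk⟩ * s) = 0 := by linarith [
      show 2 * (Real.cos (w t * s) - Real.cos (w ⟨l, hlk⟩ * s)) = 0 from hzero]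
    linarith
  -- the filtered function is a single cosine
  have hsingle : Ach σ (fun y => (a t * P t (k - 1)) * Real.cos (w t * y + b t)) := by
    refine ach_congr hkey fun y => ?_
    rw [Finset.sum_eq_single t (fun i _ hi => by rw [hP0 i hi]; ring)
      (fun h => absurd (Finset.mem_univ t) h)]
  -- rescale and shift to get cos
  have hwt : w t ≠ 0 := fun h => by rw [h] at hu; simp at hu
  have hc : a t * P t (k - 1) ≠ 0 := mul_ne_zero (ha t) hPt
  have final := ach_smul (a t * P t (k - 1))⁻¹ (ach_comp hsingle (w t)⁻¹ (-(b t) / w t))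
  refine ach_congr final fun y => ?_
  have : w t * ((w t)⁻¹ * y + -(b t) / w t) + b t = y := by field_simp; ring
  rw [this]
  field_simp
  exact mul_div_cancel_left₀ _ (ha t)
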